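/- arXiv:2202.00189 — 3 statements merged into one kernel-verified Lean document; each statement's English description precedes it below -/
import Mathlib

section
/- For natural numbers m, ℓ₁, ℓ₂, the product of falling factorials satisfies m^{\underline{ℓ₁}} · m^{\underline{ℓ₂}} = Σ_{k=0}^{min{ℓ₁,ℓ₂}} C(ℓ₁,k)·C(ℓ₂,k)·k! · m^{\underline{ℓ₁+ℓ₂-k}}. -/
open Finset

private lemma descCast_succ (m b : ℕ) :
    ((Nat.descFactorial m (b+1) : ℤ)) = ((m : ℤ) - b) * Nat.descFactorial m b := by
  rcases le_or_gt b m with h | h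
  · rw [Nat.descFactorial_succ, Nat.cast_mul, Nat.cast_sub h]
  · rw [Nat.descFactorial_eq_zero_iff_lt.2 h,
      Nat.descFactorial_eq_zero_iff_lt.2 (Nat.lt_succ_of_lt h)]
    simp

private lemma choose_fact (ℓ j : ℕ) :
    ((Nat.choose ℓ (j+1) : ℤ)) * Nat.factorial (j+1) =
      (Nat.choose ℓ j : ℤ) * Nat.factorial j * ((ℓ : ℤ) - j) := by
  rcases le_or_gt j ℓ with h | h
  · have h1 : Nat.choose ℓ (j+1) * (j+1) = Nat.choose ℓ j * (ℓ - j) :=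
      Nat.choose_succ_right_eq ℓ j
    have h2 : Nat.choose ℓ (j+1) * Nat.factorial (j+1)
        = Nat.choose ℓ j * (ℓ - j) * Nat.factorial j := by
      rw [Nat.factorial_succ, ← mul_assoc, mul_comm (Nat.choose ℓ (j+1)) (j+1),
        mul_comm (j+1) (Nat.choose ℓ (j+1)), h1]
    have := congrArg (fun n : ℕ => (n : ℤ)) h2
    push_cast [Nat.cast_sub h] at this
    linarith [this]
  · rw [Nat.choose_eq_zero_of_lt h, Nat.choose_eq_zero_of_lt (Nat.lt_succ_of_lt h)]
    simp

private lemma key (m ℓ₁ ℓ₂ : ℕ) :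
    ((Nat.descFactorial m ℓ₁ : ℤ)) * Nat.descFactorial m ℓ₂ =
      ∑ k ∈ range (ℓ₂ + 1),
        (Nat.choose ℓ₁ k : ℤ) * Nat.choose ℓ₂ k * Nat.factorial k *
          Nat.descFactorial m (ℓ₁ + ℓ₂ - k) := by
  induction ℓ₂ with
  | zero => simp
  | succ b ih =>
    have hL : ((Nat.descFactorial m ℓ₁ : ℤ)) * Nat.descFactorial m (b+1)
        = (∑ k ∈ range (b+1),
            (Nat.choose ℓ₁ k : ℤ) * Nat.choose b k * Nat.factorial k *
              Nat.descFactorial m (ℓ₁ + b + 1 - k))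
          + ∑ k ∈ range (b+1),
            (Nat.choose ℓ₁ k : ℤ) * Nat.choose b k * Nat.factorial k *
              (((ℓ₁ : ℤ) - k) * Nat.descFactorial m (ℓ₁ + b - k)) := by
      rw [descCast_succ, mul_comm ((m:ℤ) - b), ← mul_assoc, ih, Finset.sum_mul,
        ← Finset.sum_add_distrib]
      refine Finset.sum_congr rfl fun k hk => ?_
      have hk' : k ≤ b := Nat.lt_succ_iff.1 (Finset.mem_range.1 hk)
      have h1 : ℓ₁ + b + 1 - k = (ℓ₁ + b - k) + 1 := by omega
      rw [h1, descCast_succ]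
      have hc : ((ℓ₁ + b - k : ℕ) : ℤ) = (ℓ₁ : ℤ) + b - k := by
        have hle : k ≤ ℓ₁ + b := by omega
        push_cast [Nat.cast_sub hle]; ring
      rw [hc]
      ring
    have hA : (∑ k ∈ range (b + 1 + 1),
          (Nat.choose ℓ₁ k : ℤ) * Nat.choose b k * Nat.factorial k *
            Nat.descFactorial m (ℓ₁ + b + 1 - k))
        = ∑ k ∈ range (b + 1),
            (Nat.choose ℓ₁ k : ℤ) * Nat.choose b k * Nat.factorial k *
              Nat.descFactorial m (ℓ₁ + b + 1 - k) := by
      rw [Finset.sum_range_succ, Nat.choose_eq_zero_of_lt (Nat.lt_succ_self b)]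
      push_cast; ring
    have hB : (∑ k ∈ range (b+1),
          (Nat.choose ℓ₁ k : ℤ) * Nat.choose b k * Nat.factorial k *
            (((ℓ₁ : ℤ) - k) * Nat.descFactorial m (ℓ₁ + b - k)))
        = ∑ j ∈ range (b + 1),
            (Nat.choose ℓ₁ (j+1) : ℤ) * Nat.choose b j * Nat.factorial (j+1) *
              Nat.descFactorial m (ℓ₁ + b - j) := by
      refine Finset.sum_congr rfl fun j hj => ?_
      have hcf := choose_fact ℓ₁ j
      linear_combination (-(Nat.choose b j : ℤ) * Nat.descFactorial m (ℓ₁ + b - j)) * hcf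
    rw [hL, hA.symm, hB]
    rw [Finset.sum_range_succ' (fun k => (Nat.choose ℓ₁ k : ℤ) * Nat.choose (b+1) k
        * Nat.factorial k * Nat.descFactorial m (ℓ₁ + (b+1) - k)) (b+1),
      Finset.sum_range_succ' (fun k => (Nat.choose ℓ₁ k : ℤ) * Nat.choose b k
        * Nat.factorial k * Nat.descFactorial m (ℓ₁ + b + 1 - k)) (b+1)]
    have hterm : ∀ j ∈ range (b+1),
        (Nat.choose ℓ₁ (j+1) : ℤ) * Nat.choose (b+1) (j+1) * Nat.factorial (j+1) *
            Nat.descFactorial m (ℓ₁ + (b+1) - (j+1))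
        = (Nat.choose ℓ₁ (j+1) : ℤ) * Nat.choose b (j+1) * Nat.factorial (j+1) *
            Nat.descFactorial m (ℓ₁ + b + 1 - (j+1))
          + (Nat.choose ℓ₁ (j+1) : ℤ) * Nat.choose b j * Nat.factorial (j+1) *
            Nat.descFactorial m (ℓ₁ + b - j) := by
      intro j hj
      have h1 : ℓ₁ + (b+1) - (j+1) = ℓ₁ + b - j := by omega
      have h2 : ℓ₁ + b + 1 - (j+1) = ℓ₁ + b - j := by omega
      rw [h1, h2, Nat.choose_succ_succ b j]
      push_cast; ring
    have h0 : ℓ₁ + (b+1) - 0 = ℓ₁ + b + 1 - 0 := by omega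
    rw [Finset.sum_congr rfl hterm, Finset.sum_add_distrib, h0]
    simp only [Nat.choose_zero_right]
    ring

theorem descFactorial_mul_descFactorial (m ℓ₁ ℓ₂ : ℕ) :
    Nat.descFactorial m ℓ₁ * Nat.descFactorial m ℓ₂ =
      ∑ k ∈ Finset.range (min ℓ₁ ℓ₂ + 1),
        Nat.choose ℓ₁ k * Nat.choose ℓ₂ k * Nat.factorial k *
          Nat.descFactorial m (ℓ₁ + ℓ₂ - k) := by
  have h := key m ℓ₁ ℓ₂
  have hsub : Finset.range (min ℓ₁ ℓ₂ + 1) ⊆ Finset.range (ℓ₂ + 1) := by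
    apply Finset.range_subset_range.2
    omega
  have hz : ∀ k ∈ Finset.range (ℓ₂ + 1), k ∉ Finset.range (min ℓ₁ ℓ₂ + 1) →
      (Nat.choose ℓ₁ k : ℤ) * Nat.choose ℓ₂ k * Nat.factorial k *
        Nat.descFactorial m (ℓ₁ + ℓ₂ - k) = 0 := by
    intro k hk hnk
    simp only [Finset.mem_range] at hk hnk
    have hℓ₁ : ℓ₁ < k := by omega
    rw [Nat.choose_eq_zero_of_lt hℓ₁]
    ring
  have h2 : ((Nat.descFactorial m ℓ₁ : ℤ)) * Nat.descFactorial m ℓ₂ =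
      ∑ k ∈ Finset.range (min ℓ₁ ℓ₂ + 1),
        (Nat.choose ℓ₁ k : ℤ) * Nat.choose ℓ₂ k * Nat.factorial k *
          Nat.descFactorial m (ℓ₁ + ℓ₂ - k) := by
    rw [h, Finset.sum_subset hsub]
    intro x hx hnx
    exact hz x hx hnx
  have := h2
  exact_mod_cast this
end

section
/- Let X be an N-dimensional Gaussian random vector with mean zero and covariance matrix C. If N is odd then E[X₁⋯X_N] = 0, and if N is even then E[X₁⋯X_N] = Σ_{P ∈ ℘_N²} Π_{{i,j} ∈ P} C_{ij}, where ℘_N² is the set of all partitions of {1,…,N} into unordered pairs. -/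
open Matrix MeasureTheory
open scoped Classical

/-- Density of the `N`-dimensional normal distribution with mean `μ` and covariance `C`. -/
noncomputable def gaussPdf {N : ℕ} (μ : Fin N → ℝ) (C : Matrix (Fin N) (Fin N) ℝ)
    (x : Fin N → ℝ) : ℝ :=
  (2 * Real.pi) ^ (-(N : ℝ) / 2) * C.det ^ (-(1 : ℝ) / 2) *
    Real.exp (-(1 / 2) * ((x - μ) ⬝ᵥ (C⁻¹ *ᵥ (x - μ))))

/-- The `N`-dimensional Gaussian measure with mean `μ` and covariance `C`. -/
noncomputable def gaussMeasure {N : ℕ} (μ : Fin N → ℝ) (C : Matrix (Fin N) (Fin N) ℝ) :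
    Measure (Fin N → ℝ) :=
  volume.withDensity fun x => ENNReal.ofReal (gaussPdf μ C x)

/-- `P` is a partition of `{1,…,N}` into unordered pairs, encoded as a finite set of
ordered pairs `(i,j)` with `i < j`, each index belonging to exactly one pair. -/
def IsPairPartition {N : ℕ} (P : Finset (Fin N × Fin N)) : Prop :=
  (∀ p ∈ P, p.1 < p.2) ∧ ∀ i : Fin N, ∃! p, p ∈ P ∧ (i = p.1 ∨ i = p.2)

open Filter
open scoped Nat ENNReal NNReal
open scoped MatrixOrder

section Aux

lemma integrable_pow_gauss (n : ℕ) :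
    Integrable fun x : ℝ => x ^ n * Real.exp (-(1/2) * x ^ 2) := by
  have h := integrable_rpow_mul_exp_neg_mul_sq (b := 1/2) (by norm_num)
    (s := (n : ℝ)) (by exact_mod_cast lt_of_lt_of_le neg_one_lt_zero (Nat.cast_nonneg n))
  simpa [Real.rpow_natCast, neg_div] using h

noncomputable def gmoment (n : ℕ) : ℝ := ∫ x : ℝ, x ^ n * Real.exp (-(1/2) * x ^ 2)

lemma gmoment_zero : gmoment 0 = Real.sqrt (2 * Real.pi) := by
  have h := integral_gaussian (1/2)
  simp only [gmoment, pow_zero, one_mul]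
  rw [h, show Real.pi / (1/2) = 2 * Real.pi by ring]

lemma gmoment_one : gmoment 1 = 0 := by
  have h := integral_neg_eq_self (fun x : ℝ => x ^ 1 * Real.exp (-(1/2) * x ^ 2)) volume
  simp only [neg_sq, pow_one, neg_mul, integral_neg] at h
  have : -gmoment 1 = gmoment 1 := by simpa [gmoment] using h
  linarith

lemma gmoment_rec (n : ℕ) : gmoment (n + 2) = (n + 1 : ℝ) * gmoment n := by
  set F : ℝ → ℝ := fun x => x ^ (n+1) * Real.exp (-(1/2) * x ^ 2) with hFdef
  have hF : ∀ x : ℝ, HasDerivAt F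
      ((n+1 : ℝ) * (x ^ n * Real.exp (-(1/2) * x ^ 2))
        - x ^ (n+2) * Real.exp (-(1/2) * x ^ 2)) x := by
    intro x
    have h1 : HasDerivAt (fun x : ℝ => x ^ (n+1)) ((n+1 : ℝ) * x ^ n) x := by
      simpa using hasDerivAt_pow (n+1) x
    have h2 : HasDerivAt (fun x : ℝ => Real.exp (-(1/2) * x ^ 2))
        (Real.exp (-(1/2) * x ^ 2) * (-(1/2) * (2 * x ^ 1))) x := by
      exact (((hasDerivAt_pow 2 x).const_mul (-(1/2))).exp)
    refine (h1.mul h2).congr_deriv ?_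
    ring
  have htop : Tendsto F atTop (nhds 0) := by
    have h := rpow_mul_exp_neg_mul_sq_isLittleO_exp_neg (b := 1/2) (by norm_num) ((n:ℝ)+1)
    have h2 : F =o[atTop] fun x : ℝ => Real.exp (-(1/2) * x) := by
      refine Asymptotics.IsLittleO.congr' h ?_ (Eventually.of_forall fun _ => rfl)
      filter_upwards [eventually_gt_atTop (0:ℝ)] with x _
      rw [show ((n:ℝ)+1) = ((n+1 : ℕ):ℝ) by push_cast; ring, Real.rpow_natCast]
    have h3 : Tendsto (fun x : ℝ => Real.exp (-(1/2) * x)) atTop (nhds 0) :=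
      Real.tendsto_exp_atBot.comp
        ((tendsto_const_mul_atBot_of_neg (by norm_num : (-(1/2):ℝ) < 0)).mpr tendsto_id)
    exact h2.tendsto_zero_of_tendsto h3
  have hbot : Tendsto F atBot (nhds 0) := by
    have h := (htop.const_mul ((-1:ℝ)^(n+1))).comp tendsto_neg_atBot_atTop
    simp only [mul_zero] at h
    refine h.congr fun x => ?_
    simp only [Function.comp_apply, hFdef]
    rw [neg_sq, ← mul_assoc, ← mul_pow]
    ring_nf
  have hint : Integrable fun x : ℝ =>
      (n+1 : ℝ) * (x ^ n * Real.exp (-(1/2) * x ^ 2))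
        - x ^ (n+2) * Real.exp (-(1/2) * x ^ 2) :=
    ((integrable_pow_gauss n).const_mul _).sub (integrable_pow_gauss (n+2))
  have key := integral_of_hasDerivAt_of_tendsto hF hint hbot htop
  rw [integral_sub ((integrable_pow_gauss n).const_mul _) (integrable_pow_gauss (n+2)),
    integral_const_mul] at key
  have : (n+1 : ℝ) * gmoment n - gmoment (n+2) = 0 := by
    simpa [gmoment] using key
  linarith

lemma gmoment_eq (n : ℕ) :
    gmoment n = (if Odd n then 0 else ((n-1)‼ : ℝ)) * Real.sqrt (2 * Real.pi) := by
  induction n using Nat.twoStepInduction with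
  | zero => simp [gmoment_zero, Nat.doubleFactorial]
  | one => simp [gmoment_one]
  | more n ih _ =>
    rw [gmoment_rec, ih]
    by_cases h : Odd n
    · have h2 : Odd (n + 2) := by simpa [Nat.odd_add] using h
      simp [h, h2]
    · have h2 : ¬ Odd (n + 2) := by simpa [Nat.odd_add] using h
      simp only [h, h2, if_false]
      rw [show n + 2 - 1 = n + 1 from rfl, Nat.doubleFactorial_add_one]
      push_cast
      ring


variable {N : ℕ}

/-- `P` is a perfect matching of the finset `s`. -/
def IsPM (s : Finset (Fin N)) (P : Finset (Fin N × Fin N)) : Prop :=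
  (∀ p ∈ P, p.1 < p.2 ∧ p.1 ∈ s ∧ p.2 ∈ s) ∧
    ∀ i ∈ s, ∃! p, p ∈ P ∧ (i = p.1 ∨ i = p.2)

lemma isPairPartition_iff_isPM (P : Finset (Fin N × Fin N)) :
    IsPairPartition P ↔ IsPM Finset.univ P := by
  constructor
  · intro h
    exact ⟨fun p hp => ⟨h.1 p hp, Finset.mem_univ _, Finset.mem_univ _⟩,
      fun i _ => h.2 i⟩
  · intro h
    exact ⟨fun p hp => (h.1 p hp).1, fun i => h.2 i (Finset.mem_univ i)⟩

lemma isPM_empty_iff {P : Finset (Fin N × Fin N)} : IsPM (∅ : Finset (Fin N)) P ↔ P = ∅ := by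
  constructor
  · intro h
    rcases Finset.eq_empty_or_nonempty P with rfl | ⟨p, hp⟩
    · rfl
    · exact absurd ((h.1 p hp).2.1) (Finset.notMem_empty _)
  · rintro rfl
    exact ⟨by simp, by simp⟩

lemma IsPM.biUnion_eq {s : Finset (Fin N)} {P : Finset (Fin N × Fin N)} (h : IsPM s P) :
    P.biUnion (fun p => {p.1, p.2}) = s := by
  ext i
  simp only [Finset.mem_biUnion, Finset.mem_insert, Finset.mem_singleton]
  constructor
  · rintro ⟨p, hp, hi⟩
    rcases hi with rfl | rfl
    exacts [(h.1 p hp).2.1, (h.1 p hp).2.2]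
  · intro hi
    obtain ⟨p, ⟨hp, hip⟩, -⟩ := h.2 i hi
    exact ⟨p, hp, hip⟩

lemma IsPM.pairwiseDisjoint {s : Finset (Fin N)} {P : Finset (Fin N × Fin N)} (h : IsPM s P) :
    ∀ p ∈ P, ∀ q ∈ P, p ≠ q →
      Disjoint ({p.1, p.2} : Finset (Fin N)) {q.1, q.2} := by
  intro p hp q hq hne
  rw [Finset.disjoint_left]
  intro i hip hiq
  simp only [Finset.mem_insert, Finset.mem_singleton] at hip hiq
  have hi_s : i ∈ s := by
    rcases hip with rfl | rfl
    exacts [(h.1 p hp).2.1, (h.1 p hp).2.2]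
  obtain ⟨r, -, hu⟩ := h.2 i hi_s
  exact hne ((hu p ⟨hp, hip⟩).trans (hu q ⟨hq, hiq⟩).symm)

lemma IsPM.prod_eq {M : Type*} [CommMonoid M] {s : Finset (Fin N)}
    {P : Finset (Fin N × Fin N)} (h : IsPM s P) (g : Fin N → M) :
    ∏ i ∈ s, g i = ∏ p ∈ P, (g p.1 * g p.2) := by
  rw [← h.biUnion_eq, Finset.prod_biUnion (fun p hp q hq hne => h.pairwiseDisjoint p hp q hq hne)]
  exact Finset.prod_congr rfl fun p hp => Finset.prod_pair (ne_of_lt (h.1 p hp).1)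

lemma IsPM.two_mul_card {s : Finset (Fin N)} {P : Finset (Fin N × Fin N)} (h : IsPM s P) :
    2 * P.card = s.card := by
  rw [← h.biUnion_eq, Finset.card_biUnion (fun p hp q hq hne => h.pairwiseDisjoint p hp q hq hne)]
  rw [Finset.sum_congr rfl (fun p hp => Finset.card_pair (ne_of_lt (h.1 p hp).1)),
    Finset.sum_const, smul_eq_mul, mul_comm]

/-- The number of perfect matchings of a finset of cardinality `m` is `(m-1)‼` if `m` is
even, `0` otherwise. -/
lemma card_isPM (s : Finset (Fin N)) :
    (Finset.univ.filter (fun P => IsPM s P)).card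
      = if Even s.card then (s.card - 1)‼ else 0 := by
  induction s using Finset.strongInduction with
  | _ s ih =>
  rcases Finset.eq_empty_or_nonempty s with rfl | hs
  · have : Finset.univ.filter (fun P => IsPM (∅ : Finset (Fin N)) P) = {∅} := by
      ext P
      simp [isPM_empty_iff]
    rw [this]
    simp [Nat.doubleFactorial]
  · set a := s.min' hs with ha
    have has : a ∈ s := s.min'_mem hs
    have hdec : Finset.univ.filter (fun P => IsPM s P)
        = (s.erase a).biUnion (fun b =>
            (Finset.univ.filter (fun P => IsPM ((s.erase a).erase b) P)).image
              (insert (a, b))) := by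
      ext P
      simp only [Finset.mem_filter, Finset.mem_univ, true_and, Finset.mem_biUnion,
        Finset.mem_image]
      constructor
      · intro hP
        obtain ⟨p₀, ⟨hp₀P, hap₀⟩, huniq⟩ := hP.2 a has
        have h1 := hP.1 p₀ hp₀P
        have hax : a = p₀.1 := by
          rcases hap₀ with h | h
          · exact h
          · exfalso
            have h2 : p₀.1 < a := by rw [h]; exact h1.1
            exact absurd h2 (not_lt.mpr (s.min'_le p₀.1 h1.2.1))
        set b := p₀.2 with hb
        have hp₀ : p₀ = (a, b) := by rw [hax, hb]
        have hab : a < b := by rw [hax, hb]; exact h1.1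
        have hbs : b ∈ s := h1.2.2
        have hmem : (a, b) ∈ P := hp₀ ▸ hp₀P
        have hpair_ne : ∀ p ∈ P, p ≠ (a, b) → p.1 ≠ a ∧ p.2 ≠ a ∧ p.1 ≠ b ∧ p.2 ≠ b := by
          intro p hp hpne
          obtain ⟨r, -, hub⟩ := hP.2 b hbs
          have hpb : p = p₀ → False := fun h => hpne (h.trans hp₀)
          refine ⟨fun h => ?_, fun h => ?_, fun h => ?_, fun h => ?_⟩
          · exact hpb (huniq p ⟨hp, Or.inl h.symm⟩)
          · exact hpb (huniq p ⟨hp, Or.inr h.symm⟩)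
          · exact hpb ((hub p ⟨hp, Or.inl h.symm⟩).trans
              (hub p₀ ⟨hp₀P, Or.inr hb⟩).symm)
          · exact hpb ((hub p ⟨hp, Or.inr h.symm⟩).trans
              (hub p₀ ⟨hp₀P, Or.inr hb⟩).symm)
        refine ⟨b, Finset.mem_erase.mpr ⟨ne_of_gt hab, hbs⟩, P.erase (a, b), ⟨?_, ?_⟩, ?_⟩
        · intro p hp
          have hpP := Finset.mem_of_mem_erase hp
          have hpne : p ≠ (a, b) := Finset.ne_of_mem_erase hp
          have h2 := hP.1 p hpP
          obtain ⟨h3, h4, h5, h6⟩ := hpair_ne p hpP hpne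
          exact ⟨h2.1, Finset.mem_erase.mpr ⟨h5, Finset.mem_erase.mpr ⟨h3, h2.2.1⟩⟩,
            Finset.mem_erase.mpr ⟨h6, Finset.mem_erase.mpr ⟨h4, h2.2.2⟩⟩⟩
        · intro i hi
          have hib : i ≠ b := (Finset.mem_erase.mp hi).1
          have hia : i ≠ a := (Finset.mem_erase.mp (Finset.mem_of_mem_erase hi)).1
          have his : i ∈ s := Finset.mem_of_mem_erase (Finset.mem_of_mem_erase hi)
          obtain ⟨p, ⟨hpP, hip⟩, hu⟩ := hP.2 i his
          have hpne : p ≠ (a, b) := by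
            rintro rfl
            rcases hip with h | h
            · exact hia h
            · exact hib h
          exact ⟨p, ⟨Finset.mem_erase.mpr ⟨hpne, hpP⟩, hip⟩,
            fun q ⟨hq, hiq⟩ => hu q ⟨Finset.mem_of_mem_erase hq, hiq⟩⟩
        · exact Finset.insert_erase hmem
      · rintro ⟨b, hb, P', hP', rfl⟩
        have hbs : b ∈ s := Finset.mem_of_mem_erase hb
        have hab : a < b := Finset.min'_lt_of_mem_erase_min' s hs (by rwa [← ha])
        have hnotin : ∀ i, i ∈ (s.erase a).erase b → i ≠ a ∧ i ≠ b := by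
          intro i hi
          exact ⟨(Finset.mem_erase.mp (Finset.mem_of_mem_erase hi)).1,
            (Finset.mem_erase.mp hi).1⟩
        constructor
        · intro p hp
          rcases Finset.mem_insert.mp hp with rfl | hpP'
          · exact ⟨hab, has, hbs⟩
          · have h2 := hP'.1 p hpP'
            exact ⟨h2.1, Finset.mem_of_mem_erase (Finset.mem_of_mem_erase h2.2.1),
              Finset.mem_of_mem_erase (Finset.mem_of_mem_erase h2.2.2)⟩
        · intro i hi
          by_cases hia : i = a
          · refine ⟨(a, b), ⟨Finset.mem_insert_self _ _, Or.inl hia⟩, ?_⟩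
            rintro q ⟨hq, hiq⟩
            rcases Finset.mem_insert.mp hq with rfl | hqP'
            · rfl
            · exfalso
              rcases hiq with h | h
              · exact (hnotin q.1 (hP'.1 q hqP').2.1).1 (h ▸ hia)
              · exact (hnotin q.2 (hP'.1 q hqP').2.2).1 (h ▸ hia)
          by_cases hib : i = b
          · refine ⟨(a, b), ⟨Finset.mem_insert_self _ _, Or.inr hib⟩, ?_⟩
            rintro q ⟨hq, hiq⟩
            rcases Finset.mem_insert.mp hq with rfl | hqP'
            · rfl
            · exfalso
              rcases hiq with h | h
              · exact (hnotin q.1 (hP'.1 q hqP').2.1).2 (h ▸ hib)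
              · exact (hnotin q.2 (hP'.1 q hqP').2.2).2 (h ▸ hib)
          · obtain ⟨p, ⟨hpP', hip⟩, hu⟩ := hP'.2 i
              (Finset.mem_erase.mpr ⟨hib, Finset.mem_erase.mpr ⟨hia, hi⟩⟩)
            refine ⟨p, ⟨Finset.mem_insert_of_mem hpP', hip⟩, ?_⟩
            rintro q ⟨hq, hiq⟩
            rcases Finset.mem_insert.mp hq with rfl | hqP'
            · exfalso
              rcases hiq with h | h
              · exact hia h
              · exact hib h
            · exact hu q ⟨hqP', hiq⟩
    have hanotin : ∀ b, b ∈ s.erase a → ∀ P' : Finset (Fin N × Fin N),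
        IsPM ((s.erase a).erase b) P' → (a, b) ∉ P' := by
      intro b hb P' hP' h
      have := (hP'.1 _ h).2.1
      simp only [Finset.mem_erase] at this
      exact this.2.1 rfl
    rw [hdec, Finset.card_biUnion]
    · have hterm : ∀ b ∈ s.erase a,
          ((Finset.univ.filter (fun P => IsPM ((s.erase a).erase b) P)).image
            (insert (a, b))).card
          = if Even (((s.erase a).erase b).card) then ((((s.erase a).erase b).card) - 1)‼
            else 0 := by
        intro b hb
        rw [Finset.card_image_of_injOn, ih _ (ssubset_of_subset_of_ssubset
          (Finset.erase_subset _ _) (Finset.erase_ssubset has))]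
        · intro P1 h1 P2 h2 heq
          have e1 : (a, b) ∉ P1 := hanotin b hb P1 (Finset.mem_filter.mp h1).2
          have e2 : (a, b) ∉ P2 := hanotin b hb P2 (Finset.mem_filter.mp h2).2
          have : (insert (a, b) P1).erase (a, b) = (insert (a, b) P2).erase (a, b) := by
            rw [heq]
          rwa [Finset.erase_insert e1, Finset.erase_insert e2] at this
      rw [Finset.sum_congr rfl hterm]
      have hc2 : ∀ b ∈ s.erase a, ((s.erase a).erase b).card = s.card - 2 := by
        intro b hb
        rw [Finset.card_erase_of_mem hb, Finset.card_erase_of_mem has]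
        omega
      rw [Finset.sum_congr rfl fun b hb => by rw [hc2 b hb]]
      rw [Finset.sum_const, Finset.card_erase_of_mem has, smul_eq_mul]
      have hm1 : 1 ≤ s.card := Finset.card_pos.mpr hs
      rcases Nat.lt_or_ge s.card 2 with h2 | h2
      · have h1 : s.card = 1 := by omega
        rw [h1]
        simp [Nat.odd_iff]
      · obtain ⟨k, hk⟩ : ∃ k, s.card = k + 2 := ⟨s.card - 2, by omega⟩
        rw [hk]
        simp only [Nat.add_sub_cancel, Nat.even_add, show (k + 2) - 1 = k + 1 from rfl,
          Nat.add_sub_cancel]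
        by_cases hek : Even k
        · rw [if_pos hek, if_pos (by simp [Nat.even_add, hek])]
          rw [Nat.doubleFactorial_add_one]
        · rw [if_neg hek, if_neg (by simp [Nat.even_add, hek]), mul_zero]
    · intro b hb b' hb' hbb'
      rw [Function.onFun, Finset.disjoint_left]
      intro P hPb hPb'
      obtain ⟨P1, h1, rfl⟩ := Finset.mem_image.mp hPb
      obtain ⟨P2, h2, he⟩ := Finset.mem_image.mp hPb'
      have hin : (a, b') ∈ insert (a, b) P1 := by
        rw [← he]; exact Finset.mem_insert_self _ _
      rcases Finset.mem_insert.mp hin with h | h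
      · exact hbb' (by injection h.symm)
      · exact hanotin b hb P1 (Finset.mem_filter.mp h1).2 (by
          have := (((Finset.mem_filter.mp h1).2).1 _ h).2.1
          simp only [Finset.mem_erase] at this
          exact absurd rfl this.2.1)

lemma card_compat (f : Fin N → Fin N) :
    (Finset.univ.filter (fun P : Finset (Fin N × Fin N) =>
        IsPM Finset.univ P ∧ ∀ p ∈ P, f p.1 = f p.2)).card
      = ∏ j : Fin N, (Finset.univ.filter
          (fun P : Finset (Fin N × Fin N) =>
            IsPM (Finset.univ.filter (fun i => f i = j)) P)).card := by
  rw [← Fintype.card_piFinset]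
  refine Finset.card_bij' (fun P _ => fun j => P.filter (fun p => f p.1 = j))
    (fun Q _ => Finset.univ.biUnion (fun j => Q j)) ?_ ?_ ?_ ?_
  · intro P hP
    rw [Fintype.mem_piFinset]
    intro j
    rw [Finset.mem_filter]
    obtain ⟨hPM, hcomp⟩ := (Finset.mem_filter.mp hP).2
    refine ⟨Finset.mem_univ _, ?_, ?_⟩
    · intro p hp
      obtain ⟨hpP, hfp⟩ := Finset.mem_filter.mp hp
      exact ⟨(hPM.1 p hpP).1, Finset.mem_filter.mpr ⟨Finset.mem_univ _, hfp⟩,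
        Finset.mem_filter.mpr ⟨Finset.mem_univ _, (hcomp p hpP) ▸ hfp⟩⟩
    · intro i hi
      have hfi : f i = j := (Finset.mem_filter.mp hi).2
      obtain ⟨p, ⟨hpP, hip⟩, hu⟩ := hPM.2 i (Finset.mem_univ i)
      have hpj : f p.1 = j := by
        rcases hip with h | h
        · rw [← h]; exact hfi
        · rw [hcomp p hpP, ← h]; exact hfi
      refine ⟨p, ⟨Finset.mem_filter.mpr ⟨hpP, hpj⟩, hip⟩, ?_⟩
      rintro q ⟨hq, hiq⟩
      exact hu q ⟨(Finset.mem_filter.mp hq).1, hiq⟩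
  · intro Q hQ
    rw [Fintype.mem_piFinset] at hQ
    have hQ' : ∀ j, IsPM (Finset.univ.filter (fun i => f i = j)) (Q j) :=
      fun j => (Finset.mem_filter.mp (hQ j)).2
    have hfp : ∀ j p, p ∈ Q j → f p.1 = j ∧ f p.2 = j := by
      intro j p hp
      exact ⟨(Finset.mem_filter.mp ((hQ' j).1 p hp).2.1).2,
        (Finset.mem_filter.mp ((hQ' j).1 p hp).2.2).2⟩
    rw [Finset.mem_filter]
    refine ⟨Finset.mem_univ _, ⟨⟨?_, ?_⟩, ?_⟩⟩
    · intro p hp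
      obtain ⟨j, -, hpj⟩ := Finset.mem_biUnion.mp hp
      exact ⟨((hQ' j).1 p hpj).1, Finset.mem_univ _, Finset.mem_univ _⟩
    · intro i _
      obtain ⟨p, ⟨hpQ, hip⟩, hu⟩ := (hQ' (f i)).2 i
        (Finset.mem_filter.mpr ⟨Finset.mem_univ _, rfl⟩)
      refine ⟨p, ⟨Finset.mem_biUnion.mpr ⟨f i, Finset.mem_univ _, hpQ⟩, hip⟩, ?_⟩
      rintro q ⟨hq, hiq⟩
      obtain ⟨j, -, hqj⟩ := Finset.mem_biUnion.mp hq
      have hj : j = f i := by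
        rcases hiq with h | h
        · rw [← (hfp j q hqj).1, ← h]
        · rw [← (hfp j q hqj).2, ← h]
      exact hu q ⟨hj ▸ hqj, hiq⟩
    · intro p hp
      obtain ⟨j, -, hpj⟩ := Finset.mem_biUnion.mp hp
      rw [(hfp j p hpj).1, (hfp j p hpj).2]
  · intro P hP
    ext p
    simp only [Finset.mem_biUnion, Finset.mem_filter, Finset.mem_univ, true_and]
    constructor
    · rintro ⟨j, hj, -⟩; exact hj
    · intro hp; exact ⟨f p.1, hp, rfl⟩
  · intro Q hQ
    rw [Fintype.mem_piFinset] at hQ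
    have hQ' : ∀ j, IsPM (Finset.univ.filter (fun i => f i = j)) (Q j) :=
      fun j => (Finset.mem_filter.mp (hQ j)).2
    funext j
    ext p
    simp only [Finset.mem_filter, Finset.mem_biUnion, Finset.mem_univ, true_and]
    constructor
    · rintro ⟨⟨j', hpj'⟩, hfj⟩
      have h1 : f p.1 = j' := (Finset.mem_filter.mp ((hQ' j').1 p hpj').2.1).2
      have hj' : j' = j := by rw [← h1, hfj]
      exact hj' ▸ hpj'
    · intro hp
      exact ⟨⟨j, hp⟩, (Finset.mem_filter.mp ((hQ' j).1 p hp).2.1).2⟩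

lemma sum_prod_compat {R : Type*} [CommSemiring R] (A : Matrix (Fin N) (Fin N) R)
    {P : Finset (Fin N × Fin N)} (hP : IsPM (Finset.univ : Finset (Fin N)) P) :
    ∑ f ∈ Finset.univ.filter (fun f : Fin N → Fin N => ∀ p ∈ P, f p.1 = f p.2),
        ∏ i, A i (f i)
      = ∏ p ∈ P, ∑ j, A p.1 j * A p.2 j := by
  have hex : ∀ i : Fin N, ∃ p, p ∈ P ∧ (i = p.1 ∨ i = p.2) :=
    fun i => (hP.2 i (Finset.mem_univ i)).exists
  choose pr hpr1 hpr2 using hex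
  have hpruniq : ∀ i p, p ∈ P → (i = p.1 ∨ i = p.2) → pr i = p := by
    intro i p hp hip
    exact ((hP.2 i (Finset.mem_univ i)).unique ⟨hpr1 i, hpr2 i⟩ ⟨hp, hip⟩)
  have hpr_fst : ∀ p ∈ P, pr p.1 = p := fun p hp => hpruniq p.1 p hp (Or.inl rfl)
  have hpr_snd : ∀ p ∈ P, pr p.2 = p := fun p hp => hpruniq p.2 p hp (Or.inr rfl)
  rw [← Finset.prod_coe_sort,
    Finset.prod_univ_sum (fun _ : {x // x ∈ P} => (Finset.univ : Finset (Fin N)))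
      (fun p j => A p.1.1 j * A p.1.2 j), Fintype.piFinset_univ]
  refine Finset.sum_bij' (fun f _ => fun p : {x // x ∈ P} => f p.1.1)
    (fun g _ => fun i => g ⟨pr i, hpr1 i⟩) (fun f hf => Finset.mem_univ _) ?_ ?_ ?_ ?_
  · intro g _
    rw [Finset.mem_filter]
    refine ⟨Finset.mem_univ _, fun p hp => ?_⟩
    exact congrArg g (Subtype.ext ((hpr_fst p hp).trans (hpr_snd p hp).symm))
  · intro f hf
    have hcomp := (Finset.mem_filter.mp hf).2
    funext i
    rcases hpr2 i with h | h
    · exact (congrArg f h).symm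
    · exact ((hcomp (pr i) (hpr1 i)).trans (congrArg f h).symm)
  · intro g _
    funext p
    exact congrArg g (Subtype.ext (hpr_fst p.1 p.2))
  · intro f hf
    have hcomp := (Finset.mem_filter.mp hf).2
    rw [hP.prod_eq (fun i => A i (f i))]
    rw [Finset.prod_congr rfl (fun p hp => by rw [← hcomp p hp]), ← Finset.prod_coe_sort]

lemma comb_main (A : Matrix (Fin N) (Fin N) ℝ) :
    ∑ f : Fin N → Fin N, (∏ i, A i (f i)) *
        ∏ j : Fin N, (if Odd (Finset.univ.filter (fun i => f i = j)).card then (0:ℝ)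
          else (((Finset.univ.filter (fun i => f i = j)).card - 1)‼ : ℕ))
      = ∑ P ∈ Finset.univ.filter (fun P : Finset (Fin N × Fin N) => IsPairPartition P),
          ∏ p ∈ P, ∑ j, A p.1 j * A p.2 j := by
  have h1 : ∀ f : Fin N → Fin N,
      (∏ j : Fin N, (if Odd (Finset.univ.filter (fun i => f i = j)).card then (0:ℝ)
          else (((Finset.univ.filter (fun i => f i = j)).card - 1)‼ : ℕ)))
        = ((Finset.univ.filter (fun P : Finset (Fin N × Fin N) =>
            IsPM Finset.univ P ∧ ∀ p ∈ P, f p.1 = f p.2)).card : ℝ) := by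
    intro f
    rw [card_compat f, Nat.cast_prod]
    refine Finset.prod_congr rfl fun j _ => ?_
    rw [card_isPM]
    by_cases h : Even (Finset.univ.filter (fun i => f i = j)).card
    · rw [if_pos h, if_neg (by simpa [Nat.not_odd_iff_even] using h)]
    · rw [if_neg h, if_pos (Nat.not_even_iff_odd.mp h), Nat.cast_zero]
  calc ∑ f : Fin N → Fin N, (∏ i, A i (f i)) *
        ∏ j : Fin N, (if Odd (Finset.univ.filter (fun i => f i = j)).card then (0:ℝ)
          else (((Finset.univ.filter (fun i => f i = j)).card - 1)‼ : ℕ))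
      = ∑ f : Fin N → Fin N, ∑ P ∈ Finset.univ.filter
          (fun P : Finset (Fin N × Fin N) => IsPM Finset.univ P ∧ ∀ p ∈ P, f p.1 = f p.2),
          ∏ i, A i (f i) := by
        refine Finset.sum_congr rfl fun f _ => ?_
        rw [h1 f, Finset.sum_const, nsmul_eq_mul, mul_comm]
    _ = ∑ f : Fin N → Fin N, ∑ P : Finset (Fin N × Fin N),
          if IsPM Finset.univ P ∧ ∀ p ∈ P, f p.1 = f p.2 then ∏ i, A i (f i) else 0 := by
        refine Finset.sum_congr rfl fun f _ => ?_
        rw [Finset.sum_filter]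
    _ = ∑ P : Finset (Fin N × Fin N), ∑ f : Fin N → Fin N,
          if IsPM Finset.univ P ∧ ∀ p ∈ P, f p.1 = f p.2 then ∏ i, A i (f i) else 0 :=
        Finset.sum_comm
    _ = ∑ P ∈ Finset.univ.filter (fun P : Finset (Fin N × Fin N) => IsPairPartition P),
          ∏ p ∈ P, ∑ j, A p.1 j * A p.2 j := by
        rw [Finset.sum_filter]
        refine Finset.sum_congr rfl fun P _ => ?_
        by_cases h : IsPM Finset.univ P
        · rw [if_pos ((isPairPartition_iff_isPM P).mpr h), ← sum_prod_compat A h,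
            Finset.sum_filter]
          refine Finset.sum_congr rfl fun f _ => ?_
          simp [h]
        · rw [if_neg (fun hh => h ((isPairPartition_iff_isPM P).mp hh))]
          refine Finset.sum_eq_zero fun f _ => ?_
          simp [h]


lemma norm1d (c : ℕ) :
    (2 * Real.pi) ^ (-(1:ℝ)/2) * gmoment c
      = (if Odd c then (0:ℝ) else (((c-1)‼ : ℕ) : ℝ)) := by
  have h2pi : (0:ℝ) < 2 * Real.pi := by positivity
  have hone : (2 * Real.pi) ^ (-(1:ℝ)/2) * Real.sqrt (2 * Real.pi) = 1 := by
    rw [Real.sqrt_eq_rpow, ← Real.rpow_add h2pi]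
    norm_num
  rw [gmoment_eq]
  calc (2 * Real.pi) ^ (-(1:ℝ)/2) *
        ((if Odd c then 0 else ((c-1)‼ : ℝ)) * Real.sqrt (2 * Real.pi))
      = (if Odd c then 0 else ((c-1)‼ : ℝ)) *
        ((2 * Real.pi) ^ (-(1:ℝ)/2) * Real.sqrt (2 * Real.pi)) := by ring
    _ = _ := by rw [hone, mul_one]

lemma gaussPdf_nonneg {N : ℕ} (μ : Fin N → ℝ) (C : Matrix (Fin N) (Fin N) ℝ)
    (hC : 0 ≤ C.det) (x : Fin N → ℝ) : 0 ≤ gaussPdf μ C x := by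
  unfold gaussPdf
  have h1 : (0:ℝ) ≤ 2 * Real.pi := by positivity
  exact mul_nonneg (mul_nonneg (Real.rpow_nonneg h1 _) (Real.rpow_nonneg hC _))
    (Real.exp_pos _).le

lemma gaussPdf_continuous {N : ℕ} (μ : Fin N → ℝ) (C : Matrix (Fin N) (Fin N) ℝ) :
    Continuous (gaussPdf μ C) := by
  unfold gaussPdf
  refine continuous_const.mul (Real.continuous_exp.comp (continuous_const.mul ?_))
  simp only [dotProduct, Matrix.mulVec, Pi.sub_apply]
  exact continuous_finset_sum _ fun i _ =>
    (((continuous_apply i).sub continuous_const).mul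
      (continuous_finset_sum _ fun j _ =>
        continuous_const.mul ((continuous_apply j).sub continuous_const)))

lemma gauss_expand {N : ℕ} (C : Matrix (Fin N) (Fin N) ℝ) (hC : C.PosDef) :
    ∫ x, (∏ i, x i) ∂(gaussMeasure (0 : Fin N → ℝ) C)
      = ∑ f : Fin N → Fin N, (∏ i, CFC.sqrt C i (f i)) *
          ∏ j : Fin N, (if Odd (Finset.univ.filter (fun i => f i = j)).card then (0:ℝ)
            else ((((Finset.univ.filter (fun i => f i = j)).card - 1)‼ : ℕ) : ℝ)) := by
  set A := CFC.sqrt C with hAdef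
  have hAh : Aᵀ = A := by
    have h := (Matrix.nonneg_iff_posSemidef.mp (CFC.sqrt_nonneg C)).1
    rwa [Matrix.IsHermitian, Matrix.conjTranspose_eq_transpose_of_trivial] at h
  have hAA : A * A = C := CFC.sqrt_mul_sqrt_self C (Matrix.nonneg_iff_posSemidef.mpr hC.posSemidef)
  have hdetC : 0 < C.det := hC.det_pos
  have hdet2 : A.det * A.det = C.det := by rw [← Matrix.det_mul, hAA]
  have hdetA : A.det ≠ 0 := by
    intro h
    rw [h, mul_zero] at hdet2
    exact hdetC.ne hdet2
  have habs : |A.det| = Real.sqrt C.det := by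
    rw [← hdet2, ← sq, Real.sqrt_sq_eq_abs]
  have hpdfcont : Continuous (gaussPdf (0 : Fin N → ℝ) C) := gaussPdf_continuous _ _
  have hcont : Continuous (fun x : Fin N → ℝ => gaussPdf 0 C x * ∏ i, x i) :=
    hpdfcont.mul (continuous_finset_prod _ fun i _ => continuous_apply i)
  -- Step 1 : unfold the density
  have h1 : ∫ x, (∏ i, x i) ∂(gaussMeasure (0 : Fin N → ℝ) C)
      = ∫ x, gaussPdf 0 C x * ∏ i, x i := by
    have hcoe : (fun x : Fin N → ℝ => ENNReal.ofReal (gaussPdf 0 C x))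
        = fun x => ((gaussPdf 0 C x).toNNReal : ℝ≥0∞) := rfl
    rw [gaussMeasure, hcoe,
      integral_withDensity_eq_integral_smul hpdfcont.measurable.real_toNNReal]
    congr 1
    funext x
    rw [NNReal.smul_def, Real.coe_toNNReal _ (gaussPdf_nonneg _ _ hdetC.le x), smul_eq_mul]
  -- Step 2 : change of variables x = A y
  have h2 : ∫ x, gaussPdf 0 C x * ∏ i, x i
      = |A.det| * ∫ y, (gaussPdf 0 C (A *ᵥ y) * ∏ i, (A *ᵥ y) i) := by
    have hmap := Real.map_matrix_volume_pi_eq_smul_volume_pi (M := A) hdetA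
    have hlin : Continuous (Matrix.toLin' A) := LinearMap.continuous_of_finiteDimensional _
    have key := MeasureTheory.integral_map (μ := (volume : Measure (Fin N → ℝ)))
      hlin.measurable.aemeasurable hcont.aestronglyMeasurable
    rw [hmap, integral_smul_measure, ENNReal.toReal_ofReal (by positivity)] at key
    have habsne : |A.det| ≠ 0 := fun h => hdetA (abs_eq_zero.mp h)
    have key2 : ∀ y, (Matrix.toLin' A) y = A *ᵥ y := fun y => Matrix.toLin'_apply A y
    simp only [key2, smul_eq_mul] at key
    rw [abs_inv] at key
    rw [← key, ← mul_assoc, mul_inv_cancel₀ habsne, one_mul]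
  -- quadratic form
  have hquad : ∀ y : Fin N → ℝ, (A *ᵥ y) ⬝ᵥ (C⁻¹ *ᵥ (A *ᵥ y)) = y ⬝ᵥ y := by
    intro y
    have hCinv : C⁻¹ = A⁻¹ * A⁻¹ := by rw [← hAA, Matrix.mul_inv_rev]
    rw [hCinv, Matrix.mulVec_mulVec, mul_assoc,
      Matrix.nonsing_inv_mul A (isUnit_iff_ne_zero.mpr hdetA), mul_one,
      Matrix.dotProduct_mulVec,
      show A *ᵥ y = y ᵥ* A from by rw [← hAh, Matrix.mulVec_transpose, hAh],
      Matrix.vecMul_vecMul, Matrix.mul_nonsing_inv A (isUnit_iff_ne_zero.mpr hdetA),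
      Matrix.vecMul_one]
  have hsplit2pi : ((2 * Real.pi) ^ (-(1:ℝ)/2)) ^ (N:ℕ) = (2 * Real.pi) ^ (-(N:ℝ)/2) := by
    rw [← Real.rpow_natCast ((2 * Real.pi) ^ (-(1:ℝ)/2)) N, ← Real.rpow_mul (by positivity)]
    congr 1
    ring
  have h3 : ∀ y : Fin N → ℝ, gaussPdf 0 C (A *ᵥ y) * ∏ i, (A *ᵥ y) i
      = ∑ f : Fin N → Fin N, (C.det ^ (-(1:ℝ)/2) * ∏ i, A i (f i)) *
          ∏ j, ((2 * Real.pi) ^ (-(1:ℝ)/2) *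
            ((y j) ^ (Finset.univ.filter (fun i => f i = j)).card *
              Real.exp (-(1/2) * (y j)^2))) := by
    intro y
    have hexp : Real.exp (-(1/2) * (y ⬝ᵥ y)) = ∏ j, Real.exp (-(1/2) * (y j)^2) := by
      rw [← Real.exp_sum]
      congr 1
      rw [dotProduct, Finset.mul_sum]
      exact Finset.sum_congr rfl fun j _ => by ring
    have hmv : ∀ i, (A *ᵥ y) i = ∑ j, A i j * y j := fun i => rfl
    have hprod : ∏ i, (A *ᵥ y) i = ∑ f : Fin N → Fin N, ∏ i, (A i (f i) * y (f i)) := by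
      simp_rw [hmv]
      rw [Finset.prod_univ_sum]
      rw [Fintype.piFinset_univ]
    have hfib : ∀ f : Fin N → Fin N, (∏ i, y (f i))
        = ∏ j, (y j) ^ (Finset.univ.filter (fun i => f i = j)).card := by
      intro f
      rw [← Finset.prod_fiberwise Finset.univ f (fun i => y (f i))]
      refine Finset.prod_congr rfl fun j _ => ?_
      rw [Finset.prod_congr rfl (fun i hi => by
          rw [(Finset.mem_filter.mp hi).2] : ∀ i ∈ Finset.univ.filter (fun i => f i = j),
            y (f i) = y j), Finset.prod_const]
    unfold gaussPdf
    simp only [sub_zero]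
    rw [hquad y, hexp, hprod, Finset.mul_sum]
    refine Finset.sum_congr rfl fun f _ => ?_
    rw [Finset.prod_mul_distrib, hfib f]
    conv_rhs => rw [Finset.prod_mul_distrib, Finset.prod_const, Finset.card_univ,
      Fintype.card_fin, hsplit2pi, Finset.prod_mul_distrib]
    ring
  have hint : ∀ f : Fin N → Fin N, Integrable (fun y : Fin N → ℝ =>
      (C.det ^ (-(1:ℝ)/2) * ∏ i, A i (f i)) *
        ∏ j, ((2 * Real.pi) ^ (-(1:ℝ)/2) *
          ((y j) ^ (Finset.univ.filter (fun i => f i = j)).card *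
            Real.exp (-(1/2) * (y j)^2)))) := by
    intro f
    exact (Integrable.fintype_prod (f := fun j z => (2 * Real.pi) ^ (-(1:ℝ)/2) *
      (z ^ (Finset.univ.filter (fun i => f i = j)).card * Real.exp (-(1/2) * z^2)))
      (fun j => (integrable_pow_gauss _).const_mul _)).const_mul _
  have h4 : (∫ y, gaussPdf 0 C (A *ᵥ y) * ∏ i, (A *ᵥ y) i)
      = ∑ f : Fin N → Fin N, (C.det ^ (-(1:ℝ)/2) * ∏ i, A i (f i)) *
          ∏ j, ((2 * Real.pi) ^ (-(1:ℝ)/2) *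
            gmoment ((Finset.univ.filter (fun i => f i = j)).card)) := by
    rw [show (fun y : Fin N → ℝ => gaussPdf 0 C (A *ᵥ y) * ∏ i, (A *ᵥ y) i)
      = fun y => ∑ f : Fin N → Fin N, (C.det ^ (-(1:ℝ)/2) * ∏ i, A i (f i)) *
          ∏ j, ((2 * Real.pi) ^ (-(1:ℝ)/2) *
            ((y j) ^ (Finset.univ.filter (fun i => f i = j)).card *
              Real.exp (-(1/2) * (y j)^2))) from funext h3]
    rw [integral_finset_sum _ (fun f _ => hint f)]
    refine Finset.sum_congr rfl fun f _ => ?_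
    rw [integral_const_mul]
    congr 1
    rw [MeasureTheory.integral_fintype_prod_volume_eq_prod (ι := Fin N)
      (f := fun j z => (2 * Real.pi) ^ (-(1:ℝ)/2) *
        (z ^ (Finset.univ.filter (fun i => f i = j)).card * Real.exp (-(1/2) * z^2)))]
    refine Finset.prod_congr rfl fun j _ => ?_
    rw [integral_const_mul]
    rfl
  rw [h1, h2, h4, Finset.mul_sum]
  have hcc : Real.sqrt C.det * C.det ^ (-(1:ℝ)/2) = 1 := by
    rw [Real.sqrt_eq_rpow, ← Real.rpow_add hdetC]
    norm_num
  refine Finset.sum_congr rfl fun f _ => ?_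
  have hn : ∀ j : Fin N, (2 * Real.pi) ^ (-(1:ℝ)/2) *
      gmoment ((Finset.univ.filter (fun i => f i = j)).card)
      = (if Odd (Finset.univ.filter (fun i => f i = j)).card then (0:ℝ)
          else ((((Finset.univ.filter (fun i => f i = j)).card - 1)‼ : ℕ) : ℝ)) :=
    fun j => norm1d _
  rw [Finset.prod_congr rfl fun j _ => hn j, habs]
  have hX : ∀ X : ℝ, Real.sqrt C.det * ((C.det ^ (-(1:ℝ)/2) * ∏ i, A i (f i)) * X)
      = (∏ i, A i (f i)) * X := by
    intro X
    calc Real.sqrt C.det * ((C.det ^ (-(1:ℝ)/2) * ∏ i, A i (f i)) * X)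
        = (Real.sqrt C.det * C.det ^ (-(1:ℝ)/2)) * ((∏ i, A i (f i)) * X) := by ring
      _ = (∏ i, A i (f i)) * X := by rw [hcc, one_mul]
  exact hX _


end Aux

/-- Isserlis (Wick's) theorem. -/
theorem isserlis {N : ℕ} (C : Matrix (Fin N) (Fin N) ℝ) (hC : C.PosDef) :
    ∫ x, (∏ i, x i) ∂(gaussMeasure (0 : Fin N → ℝ) C) =
      if Odd N then 0
      else ∑ P ∈ Finset.univ.filter (fun P : Finset (Fin N × Fin N) => IsPairPartition P),
        ∏ p ∈ P, C p.1 p.2 := by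
  have hAh : (CFC.sqrt C)ᵀ = CFC.sqrt C := by
    have h := (Matrix.nonneg_iff_posSemidef.mp (CFC.sqrt_nonneg C)).1
    rwa [Matrix.IsHermitian, Matrix.conjTranspose_eq_transpose_of_trivial] at h
  have hAA : CFC.sqrt C * CFC.sqrt C = C := CFC.sqrt_mul_sqrt_self C (Matrix.nonneg_iff_posSemidef.mpr hC.posSemidef)
  have hmain : ∫ x, (∏ i, x i) ∂(gaussMeasure (0 : Fin N → ℝ) C)
      = ∑ P ∈ Finset.univ.filter (fun P : Finset (Fin N × Fin N) => IsPairPartition P),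
          ∏ p ∈ P, C p.1 p.2 := by
    rw [gauss_expand C hC, comb_main (CFC.sqrt C)]
    refine Finset.sum_congr rfl fun P hP => Finset.prod_congr rfl fun p hp => ?_
    have hCp : C p.1 p.2 = (CFC.sqrt C * CFC.sqrt C) p.1 p.2 := by
      rw [hAA]
    rw [hCp, Matrix.mul_apply]
    refine Finset.sum_congr rfl fun j _ => ?_
    congr 1
    have h := congrFun (congrFun hAh p.2) j
    rw [Matrix.transpose_apply] at h
    exact h.symm
  rw [hmain]
  by_cases hodd : Odd N
  · rw [if_pos hodd]
    have hempty : Finset.univ.filter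
        (fun P : Finset (Fin N × Fin N) => IsPairPartition P) = ∅ := by
      rw [Finset.filter_eq_empty_iff]
      intro P _
      intro hPP
      have h2 := ((isPairPartition_iff_isPM P).mp hPP).two_mul_card
      rw [Finset.card_univ, Fintype.card_fin] at h2
      exact (Nat.not_even_iff_odd.mpr hodd) ⟨P.card, by omega⟩
    rw [hempty, Finset.sum_empty]
  · rw [if_neg hodd]
end

section
/- Let X be a scalar Gaussian random variable with mean μ and variance σ², and let g : ℝ → ℝ be n times continuously differentiable with g and its derivatives up to order n of polynomial growth. Then E[g(X)·X^n] = Σ_{ℓ=0}^n C(n,ℓ) μ^{n-ℓ} Σ_{k=0}^{⌊ℓ/2⌋} H(ℓ,k) σ^{2(ℓ-k)} E[g^{(ℓ-2k)}(X)], where H(ℓ,k) = ℓ!/(2^k k! (ℓ-2k)!). -/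
open MeasureTheory ProbabilityTheory

open MeasureTheory ProbabilityTheory Real Filter Set Asymptotics NNReal
open scoped ENNReal

namespace SteinAux



/-- Polynomial growth predicate. -/
def PolyGrowth (f : ℝ → ℝ) : Prop := ∃ c k : ℝ, ∀ x, |f x| ≤ c * (1 + |x|) ^ k

lemma PolyGrowth.mul {f g : ℝ → ℝ} (hf : PolyGrowth f) (hg : PolyGrowth g) :
    PolyGrowth (fun x => f x * g x) := by
  obtain ⟨c1, k1, h1⟩ := hf
  obtain ⟨c2, k2, h2⟩ := hg
  refine ⟨c1 * c2, k1 + k2, fun x => ?_⟩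
  have hx : (0:ℝ) < 1 + |x| := by positivity
  rw [abs_mul, Real.rpow_add hx, mul_mul_mul_comm]
  exact mul_le_mul (h1 x) (h2 x) (abs_nonneg _) (le_trans (abs_nonneg _) (h1 x))

lemma PolyGrowth.const_nonneg {f : ℝ → ℝ} {c k : ℝ} (h : ∀ x, |f x| ≤ c * (1 + |x|) ^ k) :
    0 ≤ c := by
  have := (abs_nonneg (f 0)).trans (h 0)
  simpa using this

lemma PolyGrowth.add {f g : ℝ → ℝ} (hf : PolyGrowth f) (hg : PolyGrowth g) :
    PolyGrowth (fun x => f x + g x) := by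
  obtain ⟨c1, k1, h1⟩ := hf
  obtain ⟨c2, k2, h2⟩ := hg
  have hc1 := PolyGrowth.const_nonneg h1
  have hc2 := PolyGrowth.const_nonneg h2
  refine ⟨c1 + c2, max k1 k2, fun x => ?_⟩
  have hx : (1:ℝ) ≤ 1 + |x| := by simp [abs_nonneg]
  have e1 : (1 + |x|) ^ k1 ≤ (1 + |x|) ^ max k1 k2 :=
    Real.rpow_le_rpow_of_exponent_le hx (le_max_left _ _)
  have e2 : (1 + |x|) ^ k2 ≤ (1 + |x|) ^ max k1 k2 :=
    Real.rpow_le_rpow_of_exponent_le hx (le_max_right _ _)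
  calc |f x + g x| ≤ |f x| + |g x| := abs_add_le _ _
    _ ≤ c1 * (1 + |x|) ^ k1 + c2 * (1 + |x|) ^ k2 := add_le_add (h1 x) (h2 x)
    _ ≤ c1 * (1 + |x|) ^ max k1 k2 + c2 * (1 + |x|) ^ max k1 k2 :=
        add_le_add (mul_le_mul_of_nonneg_left e1 hc1) (mul_le_mul_of_nonneg_left e2 hc2)
    _ = (c1 + c2) * (1 + |x|) ^ max k1 k2 := by ring

lemma PolyGrowth.const_mul {f : ℝ → ℝ} (hf : PolyGrowth f) (a : ℝ) :
    PolyGrowth (fun x => a * f x) := by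
  obtain ⟨c, k, h⟩ := hf
  refine ⟨|a| * c, k, fun x => ?_⟩
  rw [abs_mul, mul_assoc]
  exact mul_le_mul_of_nonneg_left (h x) (abs_nonneg a)

lemma polyGrowth_pow_sub (μ : ℝ) (j : ℕ) : PolyGrowth (fun x => (x - μ) ^ j) := by
  refine ⟨(1 + |μ|) ^ j, (j : ℝ), fun x => ?_⟩
  have hx : (0:ℝ) ≤ 1 + |x| := by positivity
  rw [Real.rpow_natCast, abs_pow, ← mul_pow]
  refine pow_le_pow_left₀ (abs_nonneg _) ?_ j
  calc |x - μ| ≤ |x| + |μ| := abs_sub _ _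
    _ ≤ (1 + |μ|) * (1 + |x|) := by nlinarith [abs_nonneg x, abs_nonneg μ]

lemma PolyGrowth.le_nat {f : ℝ → ℝ} (hf : PolyGrowth f) :
    ∃ (c : ℝ) (m : ℕ), 0 ≤ c ∧ ∀ x, |f x| ≤ c * (1 + |x|) ^ m := by
  obtain ⟨c, k, h⟩ := hf
  refine ⟨c, ⌈k⌉₊, PolyGrowth.const_nonneg h, fun x => ?_⟩
  refine (h x).trans (mul_le_mul_of_nonneg_left ?_ (PolyGrowth.const_nonneg h))
  have hx : (1:ℝ) ≤ 1 + |x| := by simp [abs_nonneg]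
  calc (1 + |x|) ^ k ≤ (1 + |x|) ^ (⌈k⌉₊ : ℝ) :=
        Real.rpow_le_rpow_of_exponent_le hx (Nat.le_ceil k)
    _ = (1 + |x|) ^ (⌈k⌉₊ : ℕ) := Real.rpow_natCast _ _




lemma tendsto_poly_exp_atTop {b : ℝ} (hb : 0 < b) (m : ℕ) :
    Tendsto (fun y : ℝ => (1 + |y|) ^ m * Real.exp (-b * y ^ 2)) atTop (nhds 0) := by
  have h1 : Tendsto (fun y : ℝ => y ^ (m : ℝ) * Real.exp (-b * y ^ 2)) atTop (nhds 0) := by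
    refine (rpow_mul_exp_neg_mul_sq_isLittleO_exp_neg hb (m : ℝ)).isBigO.trans_tendsto ?_
    have h : Tendsto (fun y : ℝ => -(1 / 2 : ℝ) * y) atTop atBot := by
      apply Tendsto.const_mul_atTop_of_neg (by norm_num : -(1/2 : ℝ) < 0) tendsto_id
    exact Real.tendsto_exp_atBot.comp h
  have h2 : Tendsto (fun y : ℝ => 2 ^ m * (y ^ (m:ℝ) * Real.exp (-b * y ^ 2))) atTop (nhds 0) := by
    simpa using h1.const_mul ((2:ℝ) ^ m)
  refine squeeze_zero_norm' ?_ h2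
  filter_upwards [eventually_ge_atTop (1:ℝ)] with y hy
  have hy0 : (0:ℝ) ≤ y := by linarith
  have hxy : |y| = y := abs_of_nonneg hy0
  have h3 : (1 + |y|) ^ m ≤ (2 * y) ^ m := by
    refine pow_le_pow_left₀ (by positivity) ?_ m
    rw [hxy]; linarith
  rw [Real.norm_eq_abs, abs_of_nonneg (by positivity)]
  have hr : (y:ℝ) ^ (m:ℝ) = y ^ m := Real.rpow_natCast _ _
  rw [hr]
  calc (1 + |y|) ^ m * Real.exp (-b * y ^ 2) ≤ (2*y)^m * Real.exp (-b * y^2) :=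
        mul_le_mul_of_nonneg_right h3 (Real.exp_pos _).le
    _ = 2 ^ m * (y ^ m * Real.exp (-b * y ^ 2)) := by rw [mul_pow]; ring

lemma tendsto_poly_exp_atBot {b : ℝ} (hb : 0 < b) (m : ℕ) :
    Tendsto (fun y : ℝ => (1 + |y|) ^ m * Real.exp (-b * y ^ 2)) atBot (nhds 0) := by
  have := (tendsto_poly_exp_atTop hb m).comp tendsto_neg_atBot_atTop
  refine this.congr fun y => ?_
  simp [Function.comp, abs_neg, neg_sq]

lemma exists_bound_poly_exp {b : ℝ} (hb : 0 < b) (m : ℕ) :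
    ∃ C : ℝ, ∀ y, (1 + |y|) ^ m * Real.exp (-b * y ^ 2) ≤ C := by
  set f := fun y : ℝ => (1 + |y|) ^ m * Real.exp (-b * y ^ 2) with hf
  have hcont : Continuous f := by
    apply Continuous.mul
    · exact (continuous_const.add continuous_abs).pow m
    · exact (continuous_const.mul (continuous_pow 2)).rexp
  obtain ⟨A, hA⟩ : ∃ A, ∀ y ≥ A, f y ≤ 1 := by
    have := (tendsto_poly_exp_atTop hb m).eventually (eventually_le_nhds (by norm_num : (0:ℝ) < 1))
    exact eventually_atTop.mp this
  obtain ⟨B, hB⟩ : ∃ B, ∀ y ≤ B, f y ≤ 1 := by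
    have := (tendsto_poly_exp_atBot hb m).eventually (eventually_le_nhds (by norm_num : (0:ℝ) < 1))
    exact eventually_atBot.mp this
  obtain ⟨C0, hC0⟩ : ∃ C0, ∀ y ∈ Icc B A, f y ≤ C0 := by
    obtain ⟨C0, hC0⟩ := (isCompact_Icc.image_of_continuousOn hcont.continuousOn).bddAbove
    exact ⟨C0, fun y hy => hC0 (Set.mem_image_of_mem f hy)⟩
  refine ⟨max C0 1, fun y => ?_⟩
  rcases le_or_gt y B with h | h
  · exact (hB y h).trans (le_max_right _ _)
  rcases le_or_gt A y with h' | h'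
  · exact (hA y h').trans (le_max_right _ _)
  · exact (hC0 y ⟨h.le, h'.le⟩).trans (le_max_left _ _)




variable {μ : ℝ} {v : ℝ≥0}

lemma continuous_pdf (μ : ℝ) (v : ℝ≥0) : Continuous (gaussianPDFReal μ v) := by
  rw [gaussianPDFReal_def]
  exact continuous_const.mul
    ((((continuous_id.sub continuous_const).pow 2).neg.div_const _).rexp)

lemma pdf_toReal (μ : ℝ) (v : ℝ≥0) (x : ℝ) :
    (gaussianPDF μ v x).toReal = gaussianPDFReal μ v x := by
  rw [gaussianPDF, ENNReal.toReal_ofReal (gaussianPDFReal_nonneg μ v x)]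

lemma integrable_gauss_iff (hv : v ≠ 0) (f : ℝ → ℝ) :
    Integrable f (gaussianReal μ v) ↔
      Integrable (fun x => f x * gaussianPDFReal μ v x) volume := by
  rw [gaussianReal_of_var_ne_zero μ hv,
    integrable_withDensity_iff (measurable_gaussianPDF μ v)
      (ae_of_all _ fun x => ENNReal.ofReal_lt_top)]
  simp_rw [pdf_toReal]

lemma integral_gauss (hv : v ≠ 0) (f : ℝ → ℝ) :
    ∫ x, f x ∂(gaussianReal μ v) = ∫ x, f x * gaussianPDFReal μ v x := by
  rw [gaussianReal_of_var_ne_zero μ hv]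
  have h : (fun x => ENNReal.ofReal (gaussianPDFReal μ v x)) =
      fun x => ((gaussianPDFReal μ v x).toNNReal : ℝ≥0∞) := rfl
  rw [gaussianPDF_def, h,
    integral_withDensity_eq_integral_smul (measurable_gaussianPDFReal μ v).real_toNNReal f]
  congr 1
  ext x
  rw [NNReal.smul_def, smul_eq_mul, Real.coe_toNNReal _ (gaussianPDFReal_nonneg μ v x), mul_comm]

/-- integrability of (1+|x|)^m * pdf wrt volume -/
lemma integrable_poly_pdf (hv : v ≠ 0) (m : ℕ) :
    Integrable (fun x => (1 + |x|) ^ m * gaussianPDFReal μ v x) volume := by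
  have hV : (0:ℝ) < v := by positivity
  set b : ℝ := (2 * (v:ℝ))⁻¹ with hb
  have hbpos : 0 < b := by positivity
  obtain ⟨C, hC⟩ := exists_bound_poly_exp (b := b/2) (by positivity) m
  have hC0 : 0 ≤ C := le_trans (by positivity) (hC 0)
  -- dominating function
  have hint : Integrable (fun x => ((√(2 * π * v))⁻¹ * ((1 + |μ|) ^ m * C)) *
      Real.exp (-(b/2) * (x - μ) ^ 2)) volume := by
    apply Integrable.const_mul
    have := (integrable_exp_neg_mul_sq (b := b/2) (by positivity)).comp_sub_right μ
    simpa using this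
  refine hint.mono' ?_ ?_
  · apply Continuous.aestronglyMeasurable
    apply Continuous.mul
    · exact (continuous_const.add continuous_abs).pow m
    · exact continuous_pdf μ v
  · filter_upwards with x
    have hpdf : gaussianPDFReal μ v x =
        (√(2 * π * v))⁻¹ * Real.exp (-b * (x - μ) ^ 2) := by
      rw [gaussianPDFReal]
      congr 1
      rw [hb]
      ring
    have h1 : (1 + |x|) ^ m ≤ (1 + |μ|) ^ m * (1 + |x - μ|) ^ m := by
      rw [← mul_pow]
      refine pow_le_pow_left₀ (by positivity) ?_ m
      have := abs_sub_abs_le_abs_sub x μ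
      nlinarith [abs_nonneg (x - μ), abs_nonneg μ, abs_nonneg x, abs_sub_abs_le_abs_sub x μ]
    have h2 : (1 + |x - μ|) ^ m * Real.exp (-(b/2) * (x - μ) ^ 2) ≤ C := by
      have := hC (x - μ)
      simpa using this
    have hexp : Real.exp (-b * (x - μ)^2) =
        Real.exp (-(b/2) * (x - μ)^2) * Real.exp (-(b/2) * (x - μ)^2) := by
      rw [← Real.exp_add]; ring_nf
    rw [Real.norm_eq_abs, abs_of_nonneg (mul_nonneg (by positivity) (gaussianPDFReal_nonneg μ v x))]
    rw [hpdf, hexp]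
    have hsq : (0:ℝ) < (√(2 * π * v))⁻¹ := by
      rw [inv_pos]
      exact Real.sqrt_pos.mpr (by nlinarith [Real.pi_pos, hV])
    calc (1 + |x|) ^ m * ((√(2 * π * v))⁻¹ *
          (Real.exp (-(b/2) * (x - μ)^2) * Real.exp (-(b/2) * (x - μ)^2)))
        ≤ ((1 + |μ|) ^ m * (1 + |x - μ|) ^ m) * ((√(2 * π * v))⁻¹ *
          (Real.exp (-(b/2) * (x - μ)^2) * Real.exp (-(b/2) * (x - μ)^2))) := by
          apply mul_le_mul_of_nonneg_right h1 (by positivity)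
      _ = (√(2 * π * v))⁻¹ * (1 + |μ|) ^ m *
            ((1 + |x - μ|) ^ m * Real.exp (-(b/2) * (x - μ)^2)) * Real.exp (-(b/2) * (x - μ)^2) := by
          ring
      _ ≤ (√(2 * π * v))⁻¹ * (1 + |μ|) ^ m * C * Real.exp (-(b/2) * (x - μ)^2) := by
          apply mul_le_mul_of_nonneg_right _ (Real.exp_pos _).le
          apply mul_le_mul_of_nonneg_left h2 (by positivity)
      _ = (√(2 * π * ↑v))⁻¹ * ((1 + |μ|) ^ m * C) * Real.exp (-(b/2) * (x - μ) ^ 2) := by ring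

/-- integrability of (1+|x|)^m wrt gaussian -/
lemma integrable_poly_gauss (hv : v ≠ 0) (m : ℕ) :
    Integrable (fun x : ℝ => (1 + |x|) ^ m) (gaussianReal μ v) := by
  rw [integrable_gauss_iff hv]
  exact integrable_poly_pdf hv m

/-- any a.e.-strongly measurable function of polynomial growth is gaussian-integrable -/
lemma integrable_growth_gauss (hv : v ≠ 0) {f : ℝ → ℝ}
    (hm : AEStronglyMeasurable f (gaussianReal μ v)) (hf : PolyGrowth f) :
    Integrable f (gaussianReal μ v) := by
  obtain ⟨c, m, hc, h⟩ := hf.le_nat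
  refine ((integrable_poly_gauss hv m).const_mul c).mono' hm ?_
  filter_upwards with x
  simpa [Real.norm_eq_abs] using h x

/-- polynomial growth times pdf is volume-integrable -/
lemma integrable_growth_pdf (hv : v ≠ 0) {f : ℝ → ℝ}
    (hm : AEStronglyMeasurable f volume) (hf : PolyGrowth f) :
    Integrable (fun x => f x * gaussianPDFReal μ v x) volume := by
  obtain ⟨c, m, hc, h⟩ := hf.le_nat
  refine ((integrable_poly_pdf (μ := μ) hv m).const_mul c).mono' ?_ ?_
  · exact hm.mul (continuous_pdf μ v).aestronglyMeasurable
  · filter_upwards with x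
    rw [Real.norm_eq_abs, abs_mul, abs_of_nonneg (gaussianPDFReal_nonneg μ v x), ← mul_assoc]
    exact mul_le_mul_of_nonneg_right (h x) (gaussianPDFReal_nonneg μ v x)


section D
variable {μ : ℝ} {v : ℝ≥0}

lemma polyGrowth_sub (μ : ℝ) : PolyGrowth (fun x => x - μ) := by
  refine ⟨1 + |μ|, 1, fun x => ?_⟩
  rw [Real.rpow_one]
  calc |x - μ| ≤ |x| + |μ| := abs_sub _ _
    _ ≤ (1 + |μ|) * (1 + |x|) := by nlinarith [abs_nonneg x, abs_nonneg μ]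

lemma pdf_eq (μ : ℝ) (v : ℝ≥0) (x : ℝ) :
    gaussianPDFReal μ v x = (√(2 * π * v))⁻¹ * Real.exp (-(2 * (v:ℝ))⁻¹ * (x - μ) ^ 2) := by
  rw [gaussianPDFReal]
  congr 1
  ring

lemma hasDerivAt_pdf (hv : v ≠ 0) (x : ℝ) :
    HasDerivAt (gaussianPDFReal μ v) (-((x - μ) / v) * gaussianPDFReal μ v x) x := by
  have hV : (0:ℝ) < v := by positivity
  have h1 : HasDerivAt (fun y : ℝ => -(y - μ) ^ 2 / (2 * (v:ℝ))) (-((x - μ) / v)) x := by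
    have h := (((hasDerivAt_id x).sub_const μ).pow 2).neg.div_const (2 * (v:ℝ))
    refine h.congr_deriv ?_
    field_simp
    simp only [id]
    ring
  have h2 := (h1.exp).const_mul ((√(2 * π * (v:ℝ)))⁻¹)
  simp only [gaussianPDFReal_def]
  refine h2.congr_deriv ?_
  ring

/-- decay of growth × pdf at both infinities -/
lemma tendsto_growth_mul_pdf (hv : v ≠ 0) {f : ℝ → ℝ} (hf : PolyGrowth f) :
    Tendsto (fun x => f x * gaussianPDFReal μ v x) atTop (nhds 0) ∧
      Tendsto (fun x => f x * gaussianPDFReal μ v x) atBot (nhds 0) := by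
  have hV : (0:ℝ) < v := by positivity
  obtain ⟨c, m, hc, h⟩ := hf.le_nat
  set b : ℝ := (2 * (v:ℝ))⁻¹ with hb
  have hbpos : 0 < b := by positivity
  set K : ℝ := c * (√(2 * π * v))⁻¹ * (1 + |μ|) ^ m with hK
  set g : ℝ → ℝ := fun x => K * ((1 + |x - μ|) ^ m * Real.exp (-b * (x - μ) ^ 2)) with hg
  have hbound : ∀ x, ‖f x * gaussianPDFReal μ v x‖ ≤ g x := by
    intro x
    have hsq : (0:ℝ) ≤ (√(2 * π * (v:ℝ)))⁻¹ := by positivity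
    rw [Real.norm_eq_abs, abs_mul, abs_of_nonneg (gaussianPDFReal_nonneg μ v x), pdf_eq]
    have h1 : (1 + |x|) ^ m ≤ (1 + |μ|) ^ m * (1 + |x - μ|) ^ m := by
      rw [← mul_pow]
      refine pow_le_pow_left₀ (by positivity) ?_ m
      nlinarith [abs_nonneg (x - μ), abs_nonneg μ, abs_nonneg x, abs_sub_abs_le_abs_sub x μ]
    calc |f x| * ((√(2 * π * v))⁻¹ * Real.exp (-(2 * (v:ℝ))⁻¹ * (x - μ) ^ 2))
        ≤ (c * (1 + |x|) ^ m) * ((√(2 * π * v))⁻¹ * Real.exp (-b * (x - μ) ^ 2)) :=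
          mul_le_mul_of_nonneg_right (h x) (by positivity)
      _ ≤ (c * ((1 + |μ|) ^ m * (1 + |x - μ|) ^ m)) * ((√(2 * π * v))⁻¹ * Real.exp (-b * (x - μ) ^ 2)) := by
          apply mul_le_mul_of_nonneg_right _ (by positivity)
          exact mul_le_mul_of_nonneg_left h1 hc
      _ = g x := by rw [hg, hK]; ring
  have hsub_top : Tendsto (fun x : ℝ => x - μ) atTop atTop :=
    tendsto_atTop_add_const_right atTop (-μ) tendsto_id
  have hsub_bot : Tendsto (fun x : ℝ => x - μ) atBot atBot :=
    tendsto_atBot_add_const_right atBot (-μ) tendsto_id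
  have hgtop : Tendsto g atTop (nhds 0) := by
    have := ((tendsto_poly_exp_atTop hbpos m).comp hsub_top).const_mul K
    simpa [hg, Function.comp] using this
  have hgbot : Tendsto g atBot (nhds 0) := by
    have := ((tendsto_poly_exp_atBot hbpos m).comp hsub_bot).const_mul K
    simpa [hg, Function.comp] using this
  exact ⟨squeeze_zero_norm hbound hgtop, squeeze_zero_norm hbound hgbot⟩

/-- Stein's lemma for the one-dimensional Gaussian. -/
lemma stein (hv : v ≠ 0) {f : ℝ → ℝ} (hf : ContDiff ℝ 1 f)
    (h0 : PolyGrowth f) (h1 : PolyGrowth (deriv f)) :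
    ∫ x, f x * (x - μ) ∂(gaussianReal μ v) =
      (v:ℝ) * ∫ x, deriv f x ∂(gaussianReal μ v) := by
  have hV : (0:ℝ) < v := by positivity
  set φ : ℝ → ℝ := gaussianPDFReal μ v with hφ
  set F : ℝ → ℝ := fun x => f x * φ x with hF
  set F' : ℝ → ℝ := fun x => deriv f x * φ x + (f x * (-((x - μ) / v))) * φ x with hF'
  have hdf : Differentiable ℝ f := hf.differentiable one_ne_zero
  have hcf : Continuous f := hdf.continuous
  have hcdf : Continuous (deriv f) := (contDiff_one_iff_deriv.mp hf).2
  have hFder : ∀ x, HasDerivAt F (F' x) x := by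
    intro x
    have := ((hdf x).hasDerivAt.mul (hasDerivAt_pdf (μ := μ) hv x))
    refine this.congr_deriv ?_
    rw [hF']
    ring
  have hcont : Continuous F := hcf.mul (continuous_pdf μ v)
  have hint1 : Integrable (fun x => deriv f x * φ x) volume :=
    integrable_growth_pdf hv hcdf.aestronglyMeasurable h1
  have hint2 : Integrable (fun x => (f x * (-((x - μ) / v))) * φ x) volume := by
    apply integrable_growth_pdf hv
    · exact (hcf.mul (((continuous_id.sub continuous_const).div_const _).neg)).aestronglyMeasurable
    · refine h0.mul ?_
      obtain ⟨c, k, h⟩ := polyGrowth_sub μ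
      refine ⟨c / v, k, fun x => ?_⟩
      calc |(-((x - μ) / (v:ℝ)))| = |x - μ| / v := by
            rw [abs_neg, abs_div, abs_of_pos hV]
        _ ≤ c * (1 + |x|) ^ k / v := by gcongr; exact h x
        _ = c / v * (1 + |x|) ^ k := by ring
  have hF'int : Integrable F' volume := hint1.add hint2
  obtain ⟨htop, hbot⟩ := tendsto_growth_mul_pdf hv h0 (μ := μ) (v := v) (f := f)
  have hIoi : ∫ x in Ioi (0:ℝ), F' x = 0 - F 0 :=
    integral_Ioi_of_hasDerivAt_of_tendsto hcont.continuousWithinAt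
      (fun x _ => hFder x) hF'int.integrableOn htop
  have hIic : ∫ x in Iic (0:ℝ), F' x = F 0 - 0 :=
    integral_Iic_of_hasDerivAt_of_tendsto hcont.continuousWithinAt
      (fun x _ => hFder x) hF'int.integrableOn hbot
  have hzero : ∫ x, F' x = 0 := by
    rw [← integral_add_compl (measurableSet_Iic (a := (0:ℝ))) hF'int, compl_Iic, hIic, hIoi]
    ring
  calc ∫ x, f x * (x - μ) ∂(gaussianReal μ v)
      = ∫ x, (f x * (x - μ)) * φ x := integral_gauss hv _
    _ = ∫ x, ((v:ℝ) * (deriv f x * φ x) - (v:ℝ) * F' x) := by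
        congr 1
        ext x
        rw [hF']
        field_simp
        ring
    _ = ((v:ℝ) * ∫ x, deriv f x * φ x) - (v:ℝ) * ∫ x, F' x := by
        rw [integral_sub (hint1.const_mul _) (hF'int.const_mul _),
          MeasureTheory.integral_const_mul, MeasureTheory.integral_const_mul]
    _ = (v:ℝ) * ∫ x, deriv f x * φ x := by rw [hzero]; ring
    _ = (v:ℝ) * ∫ x, deriv f x ∂(gaussianReal μ v) := by rw [integral_gauss hv]

end D


/-- Bessel-number coefficient, set to `0` out of range. -/
noncomputable def Hc (l k : ℕ) : ℝ :=
  if 2 * k ≤ l then (l.factorial : ℝ) / (2 ^ k * k.factorial * (l - 2 * k).factorial) else 0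

lemma Hc_zero (l : ℕ) : Hc l 0 = 1 := by
  have : (l.factorial : ℝ) ≠ 0 := by positivity
  simp [Hc, div_self this]

lemma Hc_of_gt {l k : ℕ} (h : l < 2 * k) : Hc l k = 0 := by
  simp [Hc, Nat.not_le.mpr h, show ¬ (2*k ≤ l) by omega]

lemma fact_succ_real (n : ℕ) : ((n + 1).factorial : ℝ) = (n + 1) * n.factorial := by
  rw [Nat.factorial_succ]; push_cast; ring

lemma Hc_rec (m k : ℕ) : Hc (m + 2) (k + 1) = Hc (m + 1) (k + 1) + (m + 1) * Hc m k := by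
  by_cases h : 2 * k ≤ m
  · obtain ⟨b, rfl⟩ : ∃ b, m = 2 * k + b := ⟨m - 2 * k, by omega⟩
    have hk : (k.factorial : ℝ) > 0 := by positivity
    have h2k : (2:ℝ) ^ k > 0 := by positivity
    rcases Nat.eq_zero_or_pos b with rfl | hb
    · -- b = 0
      rw [Hc, if_pos (by omega), Hc, if_neg (by omega), Hc, if_pos (by omega)]
      have e1 : 2 * k + 0 + 2 - 2 * (k + 1) = 0 := by omega
      have e2 : 2 * k + 0 - 2 * k = 0 := by omega
      rw [e1, e2]
      have f1 : 2 * k + 0 + 2 = (2 * k + 1) + 1 := by omega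
      have f2 : 2 * k + 1 = (2 * k + 0) + 1 := by omega
      rw [f1, fact_succ_real, f2, fact_succ_real]
      rw [fact_succ_real k]
      rw [pow_succ]
      field_simp
      push_cast
      ring
    · obtain ⟨c, rfl⟩ : ∃ c, b = c + 1 := ⟨b - 1, by omega⟩
      rw [Hc, if_pos (by omega), Hc, if_pos (by omega), Hc, if_pos (by omega)]
      have e1 : 2 * k + (c + 1) + 2 - 2 * (k + 1) = c + 1 := by omega
      have e2 : 2 * k + (c + 1) + 1 - 2 * (k + 1) = c := by omega
      have e3 : 2 * k + (c + 1) - 2 * k = c + 1 := by omega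
      rw [e1, e2, e3]
      have f1 : 2 * k + (c + 1) + 2 = (2 * k + (c + 1) + 1) + 1 := by omega
      have f2 : 2 * k + (c + 1) + 1 = (2 * k + (c + 1)) + 1 := by omega
      rw [f1, fact_succ_real, f2, fact_succ_real]
      rw [fact_succ_real k, fact_succ_real c]
      rw [pow_succ]
      have hc : (c.factorial : ℝ) > 0 := by positivity
      have hN : ((2 * k + (c + 1)).factorial : ℝ) > 0 := by positivity
      field_simp
      push_cast
      ring
  · rw [Hc_of_gt (by omega), Hc_of_gt (by omega), Hc_of_gt (by omega)]
    ring


lemma comb (m : ℕ) (V : ℝ) (I : ℕ → ℝ) :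
    V * ((∑ k ∈ Finset.range (m+1+1), Hc (m+1) k * V^(m+1-k) * I (m+1-2*k+1))
      + ((m:ℝ)+1) * ∑ k ∈ Finset.range (m+1), Hc m k * V^(m-k) * I (m-2*k))
    = ∑ k ∈ Finset.range (m+2+1), Hc (m+2) k * V^(m+2-k) * I (m+2-2*k) := by
  have T1 : V * (∑ k ∈ Finset.range (m+1+1), Hc (m+1) k * V^(m+1-k) * I (m+1-2*k+1))
      = ∑ k ∈ Finset.range (m+1+1), Hc (m+1) k * V^(m+2-k) * I (m+2-2*k) := by
    rw [Finset.mul_sum]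
    refine Finset.sum_congr rfl fun k hk => ?_
    have hk' : k ≤ m+1 := by simpa [Nat.lt_succ_iff] using hk
    rcases le_or_gt (2*k) (m+1) with h | h
    · have e1 : m+1-2*k+1 = m+2-2*k := by omega
      have e2 : V * V^(m+1-k) = V^(m+2-k) := by
        rw [← pow_succ']
        congr 1
        omega
      rw [e1, ← e2]; ring
    · rw [Hc_of_gt h]; ring
  have T2 : V * (((m:ℝ)+1) * ∑ k ∈ Finset.range (m+1), Hc m k * V^(m-k) * I (m-2*k))
      = ∑ k ∈ Finset.range (m+1), ((m:ℝ)+1) * Hc m k * V^(m+1-k) * I (m-2*k) := by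
    rw [Finset.mul_sum, Finset.mul_sum]
    refine Finset.sum_congr rfl fun k hk => ?_
    have hk' : k ≤ m := by simpa [Nat.lt_succ_iff] using hk
    have e2 : V * V^(m-k) = V^(m+1-k) := by
      rw [← pow_succ']
      congr 1
      omega
    rw [← e2]; ring
  have peelT : (∑ k ∈ Finset.range (m+2+1), Hc (m+2) k * V^(m+2-k) * I (m+2-2*k))
      = (∑ k ∈ Finset.range (m+2), Hc (m+2) (k+1) * V^(m+2-(k+1)) * I (m+2-2*(k+1)))
        + Hc (m+2) 0 * V^(m+2-0) * I (m+2-2*0) :=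
    Finset.sum_range_succ' _ (m+2)
  have peel1 : (∑ k ∈ Finset.range (m+1+1), Hc (m+1) k * V^(m+2-k) * I (m+2-2*k))
      = (∑ k ∈ Finset.range (m+1), Hc (m+1) (k+1) * V^(m+2-(k+1)) * I (m+2-2*(k+1)))
        + Hc (m+1) 0 * V^(m+2-0) * I (m+2-2*0) :=
    Finset.sum_range_succ' _ (m+1)
  have split : (∑ k ∈ Finset.range (m+2), Hc (m+2) (k+1) * V^(m+2-(k+1)) * I (m+2-2*(k+1)))
      = (∑ k ∈ Finset.range (m+1), Hc (m+2) (k+1) * V^(m+2-(k+1)) * I (m+2-2*(k+1)))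
        + Hc (m+2) (m+1+1) * V^(m+2-(m+1+1)) * I (m+2-2*(m+1+1)) :=
    Finset.sum_range_succ _ (m+1)
  have hlast : Hc (m+2) (m+1+1) = 0 := Hc_of_gt (by omega)
  have main : (∑ k ∈ Finset.range (m+1), Hc (m+2) (k+1) * V^(m+2-(k+1)) * I (m+2-2*(k+1)))
      = (∑ k ∈ Finset.range (m+1), Hc (m+1) (k+1) * V^(m+2-(k+1)) * I (m+2-2*(k+1)))
        + ∑ k ∈ Finset.range (m+1), ((m:ℝ)+1) * Hc m k * V^(m+1-k) * I (m-2*k) := by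
    rw [← Finset.sum_add_distrib]
    refine Finset.sum_congr rfl fun k hk => ?_
    have e1 : m+2-(k+1) = m+1-k := by omega
    have e2 : m+2-2*(k+1) = m-2*k := by omega
    rw [Hc_rec, e1, e2]
    ring
  rw [mul_add, T1, T2, peelT, peel1, split, main, hlast, Hc_zero, Hc_zero]
  ring

lemma key (μ : ℝ) {v : ℝ≥0} (hv : v ≠ 0) :
    ∀ l : ℕ, ∀ g : ℝ → ℝ, ContDiff ℝ l g →
      (∀ i, i ≤ l → PolyGrowth (iteratedDeriv i g)) →
      ∫ x, g x * (x - μ) ^ l ∂(gaussianReal μ v) =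
        ∑ k ∈ Finset.range (l + 1), Hc l k * (v:ℝ) ^ (l - k) *
          ∫ x, iteratedDeriv (l - 2 * k) g x ∂(gaussianReal μ v) := by
  intro l
  induction l using Nat.strong_induction_on with
  | _ l IH =>
  match l with
  | 0 =>
    intro g hg hgrow
    simp [Hc_zero]
  | 1 =>
    intro g hg hgrow
    have hg1 : ContDiff ℝ 1 g := by exact_mod_cast hg
    have hPg : PolyGrowth g := by have := hgrow 0 (by omega); rwa [iteratedDeriv_zero] at this
    have hPg' : PolyGrowth (deriv g) := by
      have := hgrow 1 (by omega); rwa [iteratedDeriv_one] at this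
    have hs := stein (μ := μ) hv hg1 hPg hPg'
    rw [Finset.sum_range_succ, Finset.sum_range_succ, Finset.sum_range_zero]
    rw [Hc_of_gt (by omega : (1:ℕ) < 2*1), Hc_zero]
    simp only [pow_one, zero_add]
    rw [hs]
    norm_num [iteratedDeriv_one]
  | (m+2) =>
    intro g hg hgrow
    have hg1 : ContDiff ℝ 1 g := hg.of_le (by exact_mod_cast (by omega : 1 ≤ m+2))
    have hgm : ContDiff ℝ m g := hg.of_le (by exact_mod_cast (by omega : m ≤ m+2))
    have hgd : ContDiff ℝ (m+1 : ℕ) (deriv g) := by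
      have h' : ContDiff ℝ ((m+1 : ℕ) + 1) g := by exact_mod_cast hg
      exact (contDiff_succ_iff_deriv.mp h').2.2
    have hPg : PolyGrowth g := by have := hgrow 0 (by omega); rwa [iteratedDeriv_zero] at this
    have hPg' : PolyGrowth (deriv g) := by
      have := hgrow 1 (by omega); rwa [iteratedDeriv_one] at this
    have hcg' : Continuous (deriv g) := (contDiff_one_iff_deriv.mp hg1).2
    have hder : ∀ x, HasDerivAt (fun y => g y * (y - μ) ^ (m+1))
        (deriv g x * (x - μ) ^ (m+1) + g x * (((m:ℝ)+1) * (x - μ) ^ m)) x := by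
      intro x
      have h1 := (hg1.differentiable one_ne_zero x).hasDerivAt.mul
        (((hasDerivAt_id x).sub_const μ).pow (m+1))
      simp at h1
      exact h1
    have hderiv_h : deriv (fun y => g y * (y - μ) ^ (m+1)) =
        fun x => deriv g x * (x - μ) ^ (m+1) + g x * (((m:ℝ)+1) * (x - μ) ^ m) :=
      funext fun x => (hder x).deriv
    have hch : ContDiff ℝ 1 (fun y => g y * (y - μ) ^ (m+1)) :=
      hg1.mul ((contDiff_id.sub contDiff_const).pow (m+1))
    have Ph : PolyGrowth (fun y => g y * (y - μ) ^ (m+1)) :=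
      hPg.mul (polyGrowth_pow_sub μ (m+1))
    have Ph' : PolyGrowth (deriv (fun y => g y * (y - μ) ^ (m+1))) := by
      rw [hderiv_h]
      exact (hPg'.mul (polyGrowth_pow_sub μ (m+1))).add
        (hPg.mul ((polyGrowth_pow_sub μ m).const_mul ((m:ℝ)+1)))
    have step1 : (fun x => g x * (x - μ) ^ (m+2)) =
        fun x => (g x * (x - μ) ^ (m+1)) * (x - μ) := by funext x; ring
    have step2 := stein (μ := μ) hv hch Ph Ph'
    have int1 : Integrable (fun x => deriv g x * (x - μ) ^ (m+1)) (gaussianReal μ v) :=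
      integrable_growth_gauss hv
        ((hcg'.mul ((continuous_id.sub continuous_const).pow _)).aestronglyMeasurable)
        (hPg'.mul (polyGrowth_pow_sub μ (m+1)))
    have int2 : Integrable (fun x => g x * (((m:ℝ)+1) * (x - μ) ^ m)) (gaussianReal μ v) :=
      integrable_growth_gauss hv
        ((hg1.continuous.mul (continuous_const.mul
          ((continuous_id.sub continuous_const).pow _))).aestronglyMeasurable)
        (hPg.mul ((polyGrowth_pow_sub μ m).const_mul ((m:ℝ)+1)))
    have step3 : ∫ x, deriv (fun y => g y * (y - μ) ^ (m+1)) x ∂(gaussianReal μ v)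
        = (∫ x, deriv g x * (x - μ) ^ (m+1) ∂(gaussianReal μ v))
          + ((m:ℝ)+1) * ∫ x, g x * (x - μ) ^ m ∂(gaussianReal μ v) := by
      rw [hderiv_h, integral_add int1 int2]
      congr 1
      rw [show (fun x => g x * (((m:ℝ)+1) * (x - μ) ^ m)) =
        fun x => ((m:ℝ)+1) * (g x * (x - μ) ^ m) by funext x; ring]
      rw [MeasureTheory.integral_const_mul]
    have IH1 := IH (m+1) (by omega) (deriv g) hgd (fun i hi => by
      rw [← iteratedDeriv_succ']
      exact hgrow (i+1) (by omega))
    have IH2 := IH m (by omega) g hgm (fun i hi => hgrow i (by omega))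
    rw [step1, step2, step3, IH1, IH2]
    simp_rw [← iteratedDeriv_succ']
    exact comb m (v:ℝ) (fun j => ∫ x, iteratedDeriv j g x ∂(gaussianReal μ v))

end SteinAux

open SteinAux

/-- Univariate extension of Stein's lemma:
`E[g(X)·X^n] = Σ_{ℓ=0}^n C(n,ℓ) μ^{n-ℓ} Σ_{k=0}^{⌊ℓ/2⌋} H(ℓ,k) σ^{2(ℓ-k)} E[g^{(ℓ-2k)}(X)]`
for `X ~ N(μ, σ²)` (variance `v = σ²`). -/
theorem univariate_stein_extension (μ : ℝ) (v : NNReal) (n : ℕ) (g : ℝ → ℝ)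
    (hg : ContDiff ℝ n g)
    (hgrowth : ∀ i ≤ n, ∃ c k : ℝ, ∀ x, |iteratedDeriv i g x| ≤ c * (1 + |x|) ^ k) :
    ∫ x, g x * x ^ n ∂(gaussianReal μ v) =
      ∑ ℓ ∈ Finset.range (n + 1), (Nat.choose n ℓ : ℝ) * μ ^ (n - ℓ) *
        ∑ k ∈ Finset.range (ℓ / 2 + 1),
          (Nat.factorial ℓ : ℝ) /
              (2 ^ k * Nat.factorial k * Nat.factorial (ℓ - 2 * k)) *
            (v : ℝ) ^ (ℓ - k) * ∫ x, iteratedDeriv (ℓ - 2 * k) g x ∂(gaussianReal μ v) := by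
  rcases eq_or_ne v 0 with rfl | hv
  · -- degenerate case: Dirac measure at μ
    rw [gaussianReal_zero_var]
    simp only [integral_dirac, NNReal.coe_zero]
    rw [Finset.sum_eq_single 0]
    · norm_num [Nat.factorial]; ring
    · intro l hl hl0
      have hpos : 1 ≤ l := Nat.one_le_iff_ne_zero.mpr hl0
      have hinner : ∑ k ∈ Finset.range (l / 2 + 1),
          (Nat.factorial l : ℝ) / (2 ^ k * Nat.factorial k * Nat.factorial (l - 2 * k)) *
            (0 : ℝ) ^ (l - k) * iteratedDeriv (l - 2 * k) g μ = 0 := by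
        apply Finset.sum_eq_zero
        intro k hk
        have hk' : k < l / 2 + 1 := Finset.mem_range.mp hk
        have : l - k ≠ 0 := by omega
        rw [zero_pow this]
        ring
      rw [hinner]
      ring
    · intro h
      exact absurd (Finset.mem_range.mpr (by omega)) h
  · have hgc : Continuous g := hg.continuous
    have hexp : (fun x : ℝ => g x * x ^ n) =
        fun x => ∑ l ∈ Finset.range (n + 1),
          (n.choose l : ℝ) * μ ^ (n - l) * (g x * (x - μ) ^ l) := by
      funext x
      have hx : (x : ℝ) = (x - μ) + μ := by ring
      calc g x * x ^ n = g x * ((x - μ) + μ) ^ n := by rw [← hx]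
        _ = _ := by
          rw [add_pow, Finset.mul_sum]
          refine Finset.sum_congr rfl fun l hl => ?_
          ring
    have hPg : PolyGrowth g := by
      have := hgrowth 0 (by omega)
      rwa [iteratedDeriv_zero] at this
    rw [hexp, integral_finset_sum]
    · refine Finset.sum_congr rfl fun l hl => ?_
      have hln : l ≤ n := by
        have := Finset.mem_range.mp hl; omega
      rw [MeasureTheory.integral_const_mul]
      rw [key μ hv l g (hg.of_le (by exact_mod_cast hln))
        (fun i hi => hgrowth i (le_trans hi hln))]
      congr 1
      have hsub : Finset.range (l / 2 + 1) ⊆ Finset.range (l + 1) := by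
        apply Finset.range_subset_range.mpr
        omega
      rw [← Finset.sum_subset hsub]
      · refine Finset.sum_congr rfl fun k hk => ?_
        have hk' : k < l / 2 + 1 := Finset.mem_range.mp hk
        rw [Hc, if_pos (by omega)]
      · intro k hk hk'
        have h1 : k < l + 1 := Finset.mem_range.mp hk
        have h2 : ¬ k < l / 2 + 1 := fun h => hk' (Finset.mem_range.mpr h)
        rw [Hc_of_gt (by omega)]
        ring
    · intro l hl
      apply Integrable.const_mul
      exact integrable_growth_gauss hv
        ((hgc.mul ((continuous_id.sub continuous_const).pow _)).aestronglyMeasurable)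
        (hPg.mul (polyGrowth_pow_sub μ l))
end
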